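/- Let μ be a σ-finite measure and p a simple variable exponent, constant equal to p_k on each of the disjoint sets Ω₁, …, Ω_l of finite positive measure. If f = Σ_{k=1}^l β_k 1_{Ω_k} is a simple function subordinate to this partition, then the ℓ^{p(·)} norm of the sequence (⟨f, u_k⟩)_{k=1}^l, where u_k = 1_{Ω_k}/μ(Ω_k)^{1/p_k'}, equals ||f||_{L^{p(·)}(μ)}. In particular if ||f||_{L^{p(·)}} ≤ 1 then ||(⟨f,u_k⟩)||_{ℓ^{p(·)}} ≤ 1. -/

import Mathlib

open MeasureTheory Filter Topology ENNReal

/-- The contribution `|t|^{q}` to the variable-exponent modular, with the usual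
convention at `q = ∞` (zero if `t ≤ 1`, infinite otherwise). -/
noncomputable def evpow (t : ℝ) (q : ℝ≥0∞) : ℝ≥0∞ :=
  if q = ∞ then (if t ≤ 1 then 0 else ∞) else ENNReal.ofReal t ^ q.toReal

/-- The modular `∫ |f(x)/λ|^{p(x)} dμ` of a variable exponent Lebesgue space. -/
noncomputable def eModular {Ω : Type*} [MeasurableSpace Ω] (μ : Measure Ω)
    (p : Ω → ℝ≥0∞) {E : Type*} [NormedAddCommGroup E] (f : Ω → E) (lam : ℝ) : ℝ≥0∞ :=
  ∫⁻ x, evpow (‖f x‖ / lam) (p x) ∂μ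

/-- The Luxemburg norm of the variable exponent Lebesgue space `L^{p(·)}(μ)`. -/
noncomputable def eVNorm {Ω : Type*} [MeasurableSpace Ω] (μ : Measure Ω)
    (p : Ω → ℝ≥0∞) {E : Type*} [NormedAddCommGroup E] (f : Ω → E) : ℝ :=
  sInf {lam : ℝ | 0 < lam ∧ eModular μ p f lam ≤ 1}

/-- Membership in the variable exponent Lebesgue space `L^{p(·)}(μ)`. -/
def MemEVLp {Ω : Type*} [MeasurableSpace Ω] (μ : Measure Ω)
    (p : Ω → ℝ≥0∞) {E : Type*} [NormedAddCommGroup E] (f : Ω → E) : Prop :=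
  AEStronglyMeasurable f μ ∧ ∃ lam : ℝ, 0 < lam ∧ eModular μ p f lam ≤ 1

/-- The variable exponent sequence space norm `‖h‖_{ℓ^{q(·)}}`. -/
noncomputable def eSeqNorm {I : Type*} (q : I → ℝ≥0∞) {E : Type*} [NormedAddCommGroup E]
    (h : I → E) : ℝ :=
  sInf {lam : ℝ | 0 < lam ∧ ∑' i, evpow (‖h i‖ / lam) (q i) ≤ 1}

/-- For a simple exponent `p` constant equal to `pv k` on the members `S k` of a partition into
sets of finite positive measure, and a simple function `f = Σ β_k 1_{S k}` subordinate to the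
partition, the `ℓ^{p(·)}` norm of the sequence `⟨f, u_k⟩`, where
`u_k = 1_{S k} / μ(S k)^{1/p_k'}` (with `1/p_k' = 1 - 1/p_k`), equals `‖f‖_{L^{p(·)}(μ)}`;
in particular it is at most `1` whenever `‖f‖_{L^{p(·)}} ≤ 1`. -/
theorem seq_norm_of_pairings_eq_variable_Lp_norm
    {Ω : Type*} [MeasurableSpace Ω] (μ : Measure Ω) [SigmaFinite μ]
    (l : ℕ) (S : Fin l → Set Ω) (hmeas : ∀ k, MeasurableSet (S k))
    (hdisj : Pairwise (Function.onFun Disjoint S))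
    (hfin : ∀ k, μ (S k) < ⊤) (hpos : ∀ k, 0 < μ (S k))
    (hcover : ∀ x : Ω, ∃ k, x ∈ S k)
    (pv : Fin l → ℝ≥0∞) (hpv1 : ∀ k, 1 ≤ pv k) (hpvfin : ∀ k, pv k < ⊤)
    (p : Ω → ℝ≥0∞) (hconst : ∀ k, ∀ x ∈ S k, p x = pv k)
    (β : Fin l → ℝ) (f : Ω → ℝ)
    (hf : f = fun x => ∑ k, β k * (S k).indicator (fun _ => (1 : ℝ)) x) :
    eSeqNorm (fun k => pv k)
        (fun k => ∫ x, f x * ((S k).indicator (fun _ => (1 : ℝ)) x /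
          (μ (S k)).toReal ^ ((1 - 1 / pv k).toReal)) ∂μ)
      = eVNorm μ p f ∧
    (eVNorm μ p f ≤ 1 →
      eSeqNorm (fun k => pv k)
        (fun k => ∫ x, f x * ((S k).indicator (fun _ => (1 : ℝ)) x /
          (μ (S k)).toReal ^ ((1 - 1 / pv k).toReal)) ∂μ) ≤ 1) := by
  classical
  have hpv0 : ∀ k, pv k ≠ 0 := fun k h => by simpa [h] using hpv1 k
  have hpvt : ∀ k, 1 ≤ (pv k).toReal := fun k => by
    rw [← ENNReal.toReal_one]
    exact ENNReal.toReal_mono (hpvfin k).ne (hpv1 k)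
  have hpt0 : ∀ k, (0:ℝ) < (pv k).toReal := fun k => lt_of_lt_of_le one_pos (hpvt k)
  have hapos : ∀ k, 0 < (μ (S k)).toReal := fun k =>
    ENNReal.toReal_pos (hpos k).ne' (hfin k).ne
  -- f equals β k on S k
  have hfval : ∀ k, ∀ x ∈ S k, f x = β k := by
    intro k x hx
    rw [hf]
    dsimp only
    rw [Finset.sum_eq_single k]
    · simp [Set.indicator_of_mem hx]
    · intro j _ hj
      have hxj : x ∉ S j := fun hxj => Set.disjoint_left.mp (hdisj hj) hxj hx
      simp [Set.indicator_of_notMem hxj]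
    · exact fun h => absurd (Finset.mem_univ k) h
  -- the pairing integrals
  have hint : ∀ k, (∫ x, f x * ((S k).indicator (fun _ => (1 : ℝ)) x /
      (μ (S k)).toReal ^ ((1 - 1 / pv k).toReal)) ∂μ)
      = β k * (μ (S k)).toReal ^ (1 / (pv k).toReal) := by
    intro k
    set c : ℝ := (μ (S k)).toReal ^ ((1 - 1 / pv k).toReal) with hc
    have h1 : ∀ x, f x * ((S k).indicator (fun _ => (1 : ℝ)) x / c)
        = (S k).indicator (fun _ => β k / c) x := by
      intro x
      by_cases hx : x ∈ S k
      · rw [Set.indicator_of_mem hx, Set.indicator_of_mem hx, hfval k x hx]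
        ring
      · rw [Set.indicator_of_notMem hx, Set.indicator_of_notMem hx]
        simp
    simp_rw [h1]
    rw [integral_indicator_const _ (hmeas k), smul_eq_mul, mul_comm, div_mul_eq_mul_div, mul_div_assoc]
    congr 1
    have hrt : (1 - 1 / pv k).toReal = 1 - 1 / (pv k).toReal := by
      rw [ENNReal.toReal_sub_of_le (by
        rw [one_div, ENNReal.inv_le_one]; exact hpv1 k) ENNReal.one_ne_top]
      rw [ENNReal.toReal_one, one_div, one_div, ENNReal.toReal_inv]
    have hcpos : 0 < c := Real.rpow_pos_of_pos (hapos k) _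
    rw [div_eq_iff hcpos.ne', hc, hrt, ← Real.rpow_add (hapos k)]
    rw [show (1:ℝ) / (pv k).toReal + (1 - 1 / (pv k).toReal) = 1 by ring, Real.rpow_one, measureReal_def]
  -- modular equality for positive lam
  have hmod : ∀ lam : ℝ, 0 < lam →
      (∑' k : Fin l, evpow (‖β k * (μ (S k)).toReal ^ (1 / (pv k).toReal)‖ / lam) (pv k))
        = eModular μ p f lam := by
    intro lam hlam
    have hpoint : ∀ x, evpow (‖f x‖ / lam) (p x)
        = ∑ k, (S k).indicator (fun _ => evpow (|β k| / lam) (pv k)) x := by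
      intro x
      obtain ⟨k, hxk⟩ := hcover x
      rw [Finset.sum_eq_single k]
      · rw [Set.indicator_of_mem hxk, hfval k x hxk, hconst k x hxk, Real.norm_eq_abs]
      · intro j _ hj
        exact Set.indicator_of_notMem
          (fun hxj => Set.disjoint_left.mp (hdisj hj) hxj hxk) _
      · exact fun h => absurd (Finset.mem_univ k) h
    unfold eModular
    simp_rw [hpoint]
    rw [lintegral_finset_sum _ (fun k _ => Measurable.indicator measurable_const (hmeas k))]
    rw [tsum_fintype]
    apply Finset.sum_congr rfl
    intro k _
    rw [lintegral_indicator (hmeas k), setLIntegral_const]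
    have hne : pv k ≠ ∞ := (hpvfin k).ne
    rw [evpow, evpow, if_neg hne, if_neg hne]
    have har : (0:ℝ) < (μ (S k)).toReal ^ (1 / (pv k).toReal) :=
      Real.rpow_pos_of_pos (hapos k) _
    rw [Real.norm_eq_abs, abs_mul, abs_of_pos har]
    rw [show |β k| * (μ (S k)).toReal ^ (1 / (pv k).toReal) / lam
        = (|β k| / lam) * (μ (S k)).toReal ^ (1 / (pv k).toReal) by ring]
    rw [ENNReal.ofReal_mul (div_nonneg (abs_nonneg _) hlam.le)]
    rw [ENNReal.mul_rpow_of_nonneg _ _ (hpt0 k).le]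
    congr 1
    rw [ENNReal.ofReal_rpow_of_nonneg har.le (hpt0 k).le]
    rw [← Real.rpow_mul (hapos k).le]
    rw [one_div, inv_mul_cancel₀ (hpt0 k).ne', Real.rpow_one]
    exact ENNReal.ofReal_toReal (hfin k).ne
  have hkey : (fun k : Fin l => ∫ x, f x * ((S k).indicator (fun _ => (1 : ℝ)) x /
      (μ (S k)).toReal ^ ((1 - 1 / pv k).toReal)) ∂μ)
      = fun k => β k * (μ (S k)).toReal ^ (1 / (pv k).toReal) := funext hint
  have main : eSeqNorm (fun k => pv k)
      (fun k => ∫ x, f x * ((S k).indicator (fun _ => (1 : ℝ)) x /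
        (μ (S k)).toReal ^ ((1 - 1 / pv k).toReal)) ∂μ) = eVNorm μ p f := by
    rw [hkey]
    unfold eSeqNorm eVNorm
    congr 1
    ext lam
    simp only [Set.mem_setOf_eq]
    exact and_congr_right fun h1 => by rw [hmod lam h1]
  exact ⟨main, fun h => main ▸ h⟩
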